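/- Let M, P be real symmetric n×n matrices with P - M positive definite, and define the quadratic basis φ(x,z) = ½(x−z)ᵀM(x−z) and ψ(x) = ½xᵀPx. Then the semiconvex dual a(z) = −sup_{x∈ℝⁿ} (φ(x,z) − ψ(x)) is given by a(z) = ½ zᵀ Υ(P) z where Υ(P) = −M − M(P−M)⁻¹M. -/

import Mathlib

open Matrix

private lemma swap_dot {n : ℕ} (A : Matrix (Fin n) (Fin n) ℝ) (hA : Aᵀ = A)
    (u v : Fin n → ℝ) : u ⬝ᵥ (A *ᵥ v) = v ⬝ᵥ (A *ᵥ u) := by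
  rw [dotProduct_mulVec, ← mulVec_transpose, hA, dotProduct_comm]

/-- Semiconvex dual of a quadratic `ψ(x) = ½xᵀPx` with respect to the basis
`φ(x,z) = ½(x−z)ᵀM(x−z)`: `a(z) = −sup_x (φ(x,z) − ψ(x)) = ½ zᵀ Υ(P) z` with
`Υ(P) = −M − M(P−M)⁻¹M`. -/
theorem semiconvex_dual_of_quadratic {n : ℕ}
    (M P : Matrix (Fin n) (Fin n) ℝ)
    (hM : Mᵀ = M) (hP : Pᵀ = P)
    (hPM : (P - M).PosDef) :
    ∀ z : Fin n → ℝ,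
      -(⨆ x : Fin n → ℝ,
          (1/2 : ℝ) * ((x - z) ⬝ᵥ (M *ᵥ (x - z))) - (1/2 : ℝ) * (x ⬝ᵥ (P *ᵥ x)))
        = (1/2 : ℝ) * (z ⬝ᵥ ((-M - M * (P - M)⁻¹ * M) *ᵥ z)) := by
  intro z
  set Q : Matrix (Fin n) (Fin n) ℝ := P - M with hQdef
  have hQs : Qᵀ = Q := by rw [hQdef, transpose_sub, hM, hP]
  have hQu : IsUnit Q.det := isUnit_iff_ne_zero.mpr (ne_of_gt hPM.det_pos)
  set w : Fin n → ℝ := Q⁻¹ *ᵥ (M *ᵥ z) with hwdef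
  have hQw : Q *ᵥ w = M *ᵥ z := by
    rw [hwdef, mulVec_mulVec, Matrix.mul_nonsing_inv _ hQu, one_mulVec]
  have hMw : (M * Q⁻¹ * M) *ᵥ z = M *ᵥ w := by
    rw [hwdef, mulVec_mulVec, mulVec_mulVec, Matrix.mul_assoc]
  set c : ℝ := (1/2 : ℝ) * (z ⬝ᵥ ((M + M * Q⁻¹ * M) *ᵥ z)) with hcdef
  set f : (Fin n → ℝ) → ℝ := fun x =>
    (1/2 : ℝ) * ((x - z) ⬝ᵥ (M *ᵥ (x - z))) - (1/2 : ℝ) * (x ⬝ᵥ (P *ᵥ x)) with hfdef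
  have key : ∀ x : Fin n → ℝ,
      f x = c - (1/2 : ℝ) * ((x + w) ⬝ᵥ (Q *ᵥ (x + w))) := by
    intro x
    have hP2 : P = Q + M := by rw [hQdef]; abel
    have e1 : x ⬝ᵥ (Q *ᵥ w) = x ⬝ᵥ (M *ᵥ z) := by rw [hQw]
    have e2 : w ⬝ᵥ (Q *ᵥ x) = x ⬝ᵥ (M *ᵥ z) := by rw [swap_dot Q hQs, hQw]
    have e3 : w ⬝ᵥ (Q *ᵥ w) = w ⬝ᵥ (M *ᵥ z) := by rw [hQw]
    have e4 : z ⬝ᵥ (M *ᵥ w) = w ⬝ᵥ (M *ᵥ z) := swap_dot M hM z w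
    have e5 : z ⬝ᵥ (M *ᵥ x) = x ⬝ᵥ (M *ᵥ z) := swap_dot M hM z x
    simp only [hfdef, hcdef, hP2, mulVec_sub, mulVec_add, add_mulVec,
      dotProduct_sub, dotProduct_add, sub_dotProduct, add_dotProduct,
      hMw, e1, e2, e3, e4, e5]
    ring
  have hnonneg : ∀ x : Fin n → ℝ, 0 ≤ (x + w) ⬝ᵥ (Q *ᵥ (x + w)) := by
    intro x
    have := hPM.posSemidef.dotProduct_mulVec_nonneg (x + w)
    simpa using this
  have hub : ∀ x : Fin n → ℝ, f x ≤ c := by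
    intro x
    rw [key x]
    nlinarith [hnonneg x]
  have hbdd : BddAbove (Set.range f) := ⟨c, by rintro y ⟨x, rfl⟩; exact hub x⟩
  have hfw : f (-w) = c := by
    rw [key (-w)]
    simp
  have hsup : (⨆ x : Fin n → ℝ, f x) = c := by
    refine le_antisymm (ciSup_le hub) ?_
    rw [← hfw]
    exact le_ciSup hbdd (-w)
  have hneg : (-M - M * Q⁻¹ * M) = -(M + M * Q⁻¹ * M) := by abel
  calc -(⨆ x : Fin n → ℝ, f x) = -c := by rw [hsup]
    _ = (1/2 : ℝ) * (z ⬝ᵥ ((-M - M * Q⁻¹ * M) *ᵥ z)) := by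
        rw [hneg, neg_mulVec, dotProduct_neg, hcdef]; ring
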